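/- Fix real numbers x₁, x₂, x₃, pairwise distinct, and a function f : ℝ → ℝ. Suppose that for all probability vectors (p₁,p₂,p₃) and (p₁',p₂',p₃') (nonnegative, summing to 1), the implication ∑ᵢ pᵢ f(xᵢ) = ∑ᵢ pᵢ' f(xᵢ) ⟹ ∑ᵢ pᵢ xᵢ = ∑ᵢ pᵢ' xᵢ holds. Then there exist constants c₁ ≠ 0 and c₂ such that f(xᵢ) = c₁ xᵢ + c₂ for i = 1, 2, 3. -/
import Mathlib


/-- If comparing the mean of f under all three-point distributions on {x₁,x₂,x₃}
determines the mean of the identity, then f is affine (with nonzero slope) on the xᵢ. -/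
theorem stmt_18 (x : Fin 3 → ℝ) (hx : Function.Injective x) (f : ℝ → ℝ)
    (h : ∀ p p' : Fin 3 → ℝ, (∀ i, 0 ≤ p i) → (∑ i, p i) = 1 →
      (∀ i, 0 ≤ p' i) → (∑ i, p' i) = 1 →
      (∑ i, p i * f (x i)) = (∑ i, p' i * f (x i)) →
      (∑ i, p i * x i) = (∑ i, p' i * x i)) :
    ∃ c₁ c₂ : ℝ, c₁ ≠ 0 ∧ ∀ i, f (x i) = c₁ * x i + c₂ := by
  set y : Fin 3 → ℝ := fun i => f (x i) with hy
  have hx01 : x 0 ≠ x 1 := fun hh => by exact absurd (hx hh) (by decide)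
  have hx02 : x 0 ≠ x 2 := fun hh => by exact absurd (hx hh) (by decide)
  have hx12 : x 1 ≠ x 2 := fun hh => by exact absurd (hx hh) (by decide)
  -- rule out y constant
  have hnc : ¬ (y 1 = y 0 ∧ y 2 = y 0) := by
    rintro ⟨h1, h2⟩
    have := h ![1, 0, 0] ![0, 1, 0]
      (by intro i; fin_cases i <;> norm_num)
      (by simp [Fin.sum_univ_three])
      (by intro i; fin_cases i <;> norm_num)
      (by simp [Fin.sum_univ_three])
      (by simp only [Fin.sum_univ_three, Matrix.cons_val_zero, Matrix.cons_val_one,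
            Matrix.head_cons, Matrix.cons_val_two, Matrix.tail_cons]
          have : f (x 1) = f (x 0) := h1
          linarith)
    simp only [Fin.sum_univ_three, Matrix.cons_val_zero, Matrix.cons_val_one,
      Matrix.head_cons, Matrix.cons_val_two, Matrix.tail_cons] at this
    norm_num at this
    exact hx01 this
  -- key determinant identity
  set a : ℝ := y 1 - y 2 with ha
  set b : ℝ := y 2 - y 0 with hb
  set c : ℝ := y 0 - y 1 with hc
  set M : ℝ := |a| + |b| + |c| with hM
  have hMpos : 0 < 1 + M := by positivity
  set ε : ℝ := 1 / (3 * (1 + M)) with hε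
  have hεpos : 0 < ε := by positivity
  have habs : ∀ t : ℝ, |t| ≤ M → 0 ≤ 1/3 + ε * t := by
    intro t ht
    have h1 : ε * |t| ≤ 1/3 := by
      rw [hε, div_mul_eq_mul_div, one_mul, div_le_div_iff₀ (by positivity) (by norm_num)]
      nlinarith [abs_nonneg t]
    have h2 : -(ε * t) ≤ ε * |t| := by
      rw [← mul_neg]
      exact mul_le_mul_of_nonneg_left (neg_le_abs t) hεpos.le
    linarith
  have key : x 0 * (y 1 - y 2) + x 1 * (y 2 - y 0) + x 2 * (y 0 - y 1) = 0 := by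
    have ha0 : |a| ≤ M := by
      have := abs_nonneg b; have := abs_nonneg c; rw [hM]; linarith
    have hb0 : |b| ≤ M := by
      have := abs_nonneg a; have := abs_nonneg c; rw [hM]; linarith
    have hc0 : |c| ≤ M := by
      have := abs_nonneg a; have := abs_nonneg b; rw [hM]; linarith
    have this0 := h ![1/3 + ε * a, 1/3 + ε * b, 1/3 + ε * c] (fun _ => 1/3)
      (by intro i; fin_cases i
          · exact habs a ha0
          · exact habs b hb0
          · exact habs c hc0)
      (by simp only [Fin.sum_univ_three, Matrix.cons_val_zero, Matrix.cons_val_one,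
            Matrix.head_cons, Matrix.cons_val_two, Matrix.tail_cons]
          rw [ha, hb, hc]; ring)
      (by intro i; norm_num)
      (by simp [Fin.sum_univ_three])
      (by simp only [Fin.sum_univ_three, Matrix.cons_val_zero, Matrix.cons_val_one,
            Matrix.head_cons, Matrix.cons_val_two, Matrix.tail_cons]
          rw [show f (x 0) = y 0 from rfl, show f (x 1) = y 1 from rfl,
            show f (x 2) = y 2 from rfl, ha, hb, hc]; ring)
    simp only [Fin.sum_univ_three, Matrix.cons_val_zero, Matrix.cons_val_one,
      Matrix.head_cons, Matrix.cons_val_two, Matrix.tail_cons] at this0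
    have hh : ε * ((y 1 - y 2) * x 0 + (y 2 - y 0) * x 1 + (y 0 - y 1) * x 2) = 0 := by
      have haa : a = y 1 - y 2 := ha
      have hbb : b = y 2 - y 0 := hb
      have hcc : c = y 0 - y 1 := hc
      linear_combination this0 + ε * x 0 * haa + ε * x 1 * hbb + ε * x 2 * hcc
    rcases mul_eq_zero.mp hh with h' | h'
    · exact absurd h' hεpos.ne'
    · linarith
  -- y 1 ≠ y 0
  have hy10 : y 1 ≠ y 0 := by
    intro heq
    apply hnc
    refine ⟨heq, ?_⟩
    have h2 : (y 2 - y 0) * (x 1 - x 0) = 0 := by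
      rw [heq] at key; linear_combination key
    rcases mul_eq_zero.mp h2 with h' | h'
    · linarith
    · exact absurd (by linarith : x 1 = x 0) (Ne.symm hx01)
  have hxne : x 1 - x 0 ≠ 0 := sub_ne_zero.mpr (Ne.symm hx01)
  refine ⟨(y 1 - y 0) / (x 1 - x 0), y 0 - (y 1 - y 0) / (x 1 - x 0) * x 0, ?_, ?_⟩
  · exact div_ne_zero (sub_ne_zero.mpr hy10) hxne
  · have h2 : (y 2 - y 0) * (x 1 - x 0) = (y 1 - y 0) * (x 2 - x 0) := by
      linear_combination key
    intro i
    fin_cases i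
    · show y 0 = (y 1 - y 0) / (x 1 - x 0) * x 0 + (y 0 - (y 1 - y 0) / (x 1 - x 0) * x 0)
      ring
    · show y 1 = (y 1 - y 0) / (x 1 - x 0) * x 1 + (y 0 - (y 1 - y 0) / (x 1 - x 0) * x 0)
      field_simp
      ring
    · show y 2 = (y 1 - y 0) / (x 1 - x 0) * x 2 + (y 0 - (y 1 - y 0) / (x 1 - x 0) * x 0)
      field_simp
      linear_combination h2
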